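/- Over the alphabet Σ = {a, b}, let P be the regular spanner on the single variable x that on every document of the form a^i b a^j (with i, j ≥ 0) captures exactly the two mappings x ↦ [0, i⟩ and x ↦ [i+1, i+j+1⟩, and captures no mapping on any other document. Then the skyline of P under the span length domination relation (the spanner that on a^i b a^j keeps only the mapping(s) assigning x to a longest of these two spans, and captures nothing elsewhere) is not a regular spanner. -/

import Mathlib

namespace DocSpanners

/-- A span: a pair of endpoint positions `[i, j⟩`. -/
abbrev Span : Type := ℕ × ℕ

/-- `s` is a span of document `d`. -/
def IsSpanOf {α : Type} (d : List α) (s : Span) : Prop :=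
  s.1 ≤ s.2 ∧ s.2 ≤ d.length

/-- A (schemaless) mapping over variable type `V`: a partial assignment of spans. -/
abbrev Mapping (V : Type) : Type := V → Option Span

/-- `m` is a mapping of document `d`. -/
def MappingOf {α V : Type} (d : List α) (m : Mapping V) : Prop :=
  ∀ x s, m x = some s → IsSpanOf d s

/-- A spanner: maps documents to sets of mappings. -/
abbrev Spanner (α V : Type) : Type := List α → Set (Mapping V)

/-- Labels of a variable-set automaton: letters and variable markers. -/
inductive Label (α V : Type) : Type where
  | letter (a : α)
  | vopen (x : V)
  | vclose (x : V)
deriving DecidableEq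

/-- The sequence of letters of a ref-word. -/
def letters {α V : Type} (w : List (Label α V)) : List α :=
  w.filterMap fun l => match l with
    | Label.letter a => some a
    | _ => none

/-- A ref-word is valid if for each variable, either its markers do not appear, or
the opening and closing markers appear exactly once with the opening first. -/
def ValidRef {α V : Type} [DecidableEq α] [DecidableEq V] (w : List (Label α V)) : Prop :=
  ∀ x : V,
    (Label.vopen x ∉ w ∧ Label.vclose x ∉ w) ∨
    (w.count (Label.vopen x) = 1 ∧ w.count (Label.vclose x) = 1 ∧
      w.idxOf (Label.vopen x) < w.idxOf (Label.vclose x))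

/-- The mapping defined by a (valid) ref-word: each marked variable is sent to the
span delimited by the positions at which its markers are read. -/
def refMapping {α V : Type} [DecidableEq α] [DecidableEq V] (w : List (Label α V)) :
    Mapping V := fun x =>
  if Label.vopen x ∈ w then
    some ((letters (w.take (w.idxOf (Label.vopen x)))).length,
          (letters (w.take (w.idxOf (Label.vclose x)))).length)
  else none

/-- A variable-set automaton with state type `Q`. -/
structure VA (α V Q : Type) : Type where
  init : Q
  final : Set Q
  trans : Q → Label α V → Q → Prop

/-- Paths in a VA. -/
inductive VA.Path {α V Q : Type} (A : VA α V Q) : Q → List (Label α V) → Q → Prop where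
  | nil (q : Q) : VA.Path A q [] q
  | cons {q q' q'' : Q} {l : Label α V} {w : List (Label α V)} :
      A.trans q l q' → VA.Path A q' w q'' → VA.Path A q (l :: w) q''

/-- The VA accepts the ref-word `w` (an accepting run reads `w`). -/
def VA.AcceptsRef {α V Q : Type} (A : VA α V Q) (w : List (Label α V)) : Prop :=
  ∃ qf ∈ A.final, A.Path A.init w qf

/-- A VA is sequential if every accepting run is valid. -/
def VA.Sequential {α V Q : Type} [DecidableEq α] [DecidableEq V] (A : VA α V Q) : Prop :=
  ∀ w, A.AcceptsRef w → ValidRef w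

/-- The spanner defined by a (sequential) VA. -/
def VA.spanner {α V Q : Type} [DecidableEq α] [DecidableEq V] (A : VA α V Q) :
    Spanner α V := fun d =>
  {m | ∃ w, A.AcceptsRef w ∧ letters w = d ∧ refMapping w = m}

/-- A spanner is regular if it is defined by some sequential VA with finitely many states. -/
def IsRegular {α V : Type} [DecidableEq α] [DecidableEq V] (P : Spanner α V) : Prop :=
  ∃ (Q : Type) (_ : Fintype Q) (A : VA α V Q), A.Sequential ∧ A.spanner = P

/-- The skyline operator: keep only the mappings of `P d` that are maximal under `R d`. -/
def skyline {α V : Type} (P : Spanner α V)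
    (R : List α → Mapping V → Mapping V → Prop) : Spanner α V := fun d =>
  {m | m ∈ P d ∧ ∀ m' ∈ P d, m' ≠ m → ¬ R d m m'}

/-- The variable inclusion domination relation: `m2` extends `m1`. -/
def varIncRel {V : Type} (m1 m2 : Mapping V) : Prop :=
  ∀ x s, m1 x = some s → m2 x = some s

/-- Two mappings have the same domain. -/
def sameDom {V : Type} (m1 m2 : Mapping V) : Prop :=
  ∀ x, m1 x = none ↔ m2 x = none

/-- The span inclusion domination relation. -/
def spanIncRel {V : Type} (m1 m2 : Mapping V) : Prop :=
  sameDom m1 m2 ∧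
    ∀ x s1 s2, m1 x = some s1 → m2 x = some s2 → s2.1 ≤ s1.1 ∧ s1.2 ≤ s2.2

/-- The left-to-right domination relation: same start, `m2` no shorter. -/
def ltrRel {V : Type} (m1 m2 : Mapping V) : Prop :=
  sameDom m1 m2 ∧
    ∀ x s1 s2, m1 x = some s1 → m2 x = some s2 →
      s1.1 = s2.1 ∧ s1.2 - s1.1 ≤ s2.2 - s2.1

/-- The span length domination relation: `m2`'s spans are no shorter. -/
def spanLenRel {V : Type} (m1 m2 : Mapping V) : Prop :=
  sameDom m1 m2 ∧
    ∀ x s1 s2, m1 x = some s1 → m2 x = some s2 → s1.2 - s1.1 ≤ s2.2 - s2.1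


/-- The spanner on one variable (alphabet `Bool` with `a := false`, `b := true`) that on
every document `a^i b a^j` extracts exactly the mappings `x ↦ [0, i⟩` and
`x ↦ [i+1, i+j+1⟩`, and nothing on other documents. -/
def stmt3Spanner : Spanner Bool Unit := fun d =>
  {m | ∃ i j : ℕ,
        d = List.replicate i false ++ true :: List.replicate j false ∧
        (m () = some (0, i) ∨ m () = some (i + 1, i + j + 1))}


section Aux

variable {α V Q : Type}

lemma VA.Path.append_path {A : VA α V Q} {q q' q'' : Q} {u v : List (Label α V)}
    (h1 : A.Path q u q') (h2 : A.Path q' v q'') : A.Path q (u ++ v) q'' := by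
  induction h1 with
  | nil => simpa using h2
  | cons ht _ ih => exact VA.Path.cons ht (ih h2)

lemma VA.Path.split {A : VA α V Q} {q q'' : Q} (u v : List (Label α V))
    (h : A.Path q (u ++ v) q'') : ∃ q', A.Path q u q' ∧ A.Path q' v q'' := by
  induction u generalizing q with
  | nil => exact ⟨q, VA.Path.nil q, by simpa using h⟩
  | cons l u ih =>
    rw [List.cons_append] at h
    cases h with
    | cons ht hp =>
      obtain ⟨q', h1, h2⟩ := ih hp
      exact ⟨q', VA.Path.cons ht h1, h2⟩

lemma exists_stateSeq {A : VA α V Q} {q q' : Q} {w : List (Label α V)}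
    (h : A.Path q w q') :
    ∃ f : ℕ → Q, f 0 = q ∧ f w.length = q' ∧
      ∀ t (ht : t < w.length), A.trans (f t) (w.get ⟨t, ht⟩) (f (t + 1)) := by
  induction h with
  | nil q => exact ⟨fun _ => q, rfl, rfl, fun t ht => absurd ht (by simp)⟩
  | @cons q q' q'' l w ht hp ih =>
    obtain ⟨f, hf0, hfl, hstep⟩ := ih
    refine ⟨fun t => if t = 0 then q else f (t - 1), by simp, by simp [hfl], ?_⟩
    intro t hlt
    cases t with
    | zero => simpa [hf0] using ht
    | succ t =>
      simp only [List.length_cons, Nat.add_lt_add_iff_right] at hlt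
      simpa using hstep t hlt

lemma path_of_seq {A : VA α V Q} (f : ℕ → Q) (l : Label α V) (n : ℕ)
    (hstep : ∀ t < n, A.trans (f t) l (f (t + 1))) :
    ∀ t1 t2, t1 ≤ t2 → t2 ≤ n → A.Path (f t1) (List.replicate (t2 - t1) l) (f t2) := by
  intro t1 t2 h12 h2n
  induction t2 with
  | zero =>
    have : t1 = 0 := Nat.le_zero.mp h12
    subst this
    exact VA.Path.nil _
  | succ t2 ih =>
    rcases Nat.eq_or_lt_of_le h12 with h | h
    · subst h; simpa using VA.Path.nil _
    · have h1 : t1 ≤ t2 := Nat.lt_succ_iff.mp h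
      have hrep : List.replicate (t2 + 1 - t1) l = List.replicate (t2 - t1) l ++ [l] := by
        have : t2 + 1 - t1 = (t2 - t1) + 1 := by omega
        rw [this, List.replicate_succ' ]
      rw [hrep]
      exact (ih h1 (by omega)).append_path
        (VA.Path.cons (hstep t2 (by omega)) (VA.Path.nil _))

lemma pump [Fintype Q] {A : VA α V Q} {q q' : Q} {l : Label α V} {n : ℕ}
    (h : A.Path q (List.replicate n l) q') (hn : Fintype.card Q ≤ n) :
    ∃ k, 0 < k ∧ A.Path q (List.replicate (n + k) l) q' := by
  obtain ⟨f, hf0, hfl, hstep⟩ := exists_stateSeq h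
  simp only [List.length_replicate] at hfl hstep
  have hstep' : ∀ t < n, A.trans (f t) l (f (t + 1)) := by
    intro t ht
    simpa [List.getElem_replicate] using hstep t ht
  have hcard : Fintype.card Q < Fintype.card (Fin (n + 1)) := by simpa using Nat.lt_succ_of_le hn
  obtain ⟨t1, t2, hne, heq⟩ := Fintype.exists_ne_map_eq_of_card_lt
    (fun t : Fin (n + 1) => f t.1) hcard
  wlog hlt : (t1 : ℕ) < (t2 : ℕ) generalizing t1 t2
  · have hne' : (t1 : ℕ) ≠ (t2 : ℕ) := fun hc => hne (Fin.ext hc)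
    exact this t2 t1 hne.symm heq.symm (by omega)
  refine ⟨t2 - t1, by omega, ?_⟩
  have seg : ∀ a b : ℕ, a ≤ b → b ≤ n → A.Path (f a) (List.replicate (b - a) l) (f b) :=
    path_of_seq f l n hstep'
  have hrw : f (t2 : ℕ) = f (t1 : ℕ) := heq.symm
  have pA : A.Path (f 0) (List.replicate ((t1:ℕ) - 0) l) (f t1) := seg 0 t1 (by omega) (by omega)
  have pB : A.Path (f t1) (List.replicate ((t2:ℕ) - (t1:ℕ)) l) (f t1) := by
    have := seg t1 t2 (by omega) (by omega); rwa [hrw] at this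
  have pC : A.Path (f t1) (List.replicate (n - (t2:ℕ)) l) (f n) := by
    have := seg t2 n (by omega) (by omega); rwa [hrw] at this
  have := ((pA.append_path pB).append_path pB).append_path pC
  rw [hf0, hfl] at this
  simpa [← List.replicate_add, show (t1:ℕ) + ((t2:ℕ) - t1) + ((t2:ℕ) - t1) + (n - (t2:ℕ)) = n + ((t2:ℕ) - t1) by omega] using this

lemma letters_append (u v : List (Label α V)) : letters (u ++ v) = letters u ++ letters v :=
  List.filterMap_append

lemma letters_replicate (n : ℕ) (a : α) :
    letters (List.replicate n (Label.letter a) : List (Label α V)) = List.replicate n a := by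
  induction n with
  | zero => rfl
  | succ n ih =>
    rw [List.replicate_succ, List.replicate_succ]
    simp only [letters, List.filterMap_cons] at ih ⊢
    rw [ih]

lemma letters_length_le (u : List (Label α V)) : (letters u).length ≤ u.length :=
  List.length_filterMap_le _ _

lemma all_letters_eq (u : List (Label α V)) (h : ∀ x ∈ u, ∃ a, x = Label.letter a) :
    u = (letters u).map Label.letter := by
  induction u with
  | nil => rfl
  | cons x u ih =>
    obtain ⟨a, rfl⟩ := h x List.mem_cons_self
    have := ih (fun y hy => h y (List.mem_cons_of_mem _ hy))
    simp only [letters, List.filterMap_cons] at this ⊢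
    simp [← this]

lemma indexOf_lt_of_mem_take {β : Type} [DecidableEq β] {w : List β} {a : β} {k : ℕ}
    (h : a ∈ w.take k) : w.idxOf a < k := by
  induction w generalizing k with
  | nil => simp at h
  | cons b w ih =>
    cases k with
    | zero => simp at h
    | succ k =>
      rw [List.take_succ_cons] at h
      by_cases hab : b = a
      · subst hab; simp [List.idxOf_cons_self]
      · rcases List.mem_cons.mp h with h | h
        · exact absurd h.symm hab
        · rw [List.idxOf_cons_ne _ hab]
          exact Nat.succ_lt_succ (ih h)

lemma indexOf_append_of_not_mem {β : Type} [DecidableEq β] {u v : List β} {a : β}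
    (h : a ∉ u) : (u ++ v).idxOf a = u.length + v.idxOf a := by
  induction u with
  | nil => simp
  | cons b u ih =>
    have hb : b ≠ a := fun hba => h (hba ▸ (List.mem_cons_self : b ∈ b :: u))
    rw [List.cons_append, List.idxOf_cons_ne _ hb, ih (fun hm => h (List.mem_cons_of_mem _ hm))]
    simp [Nat.succ_add]

lemma indexOf_true (i j : ℕ) :
    (List.replicate i false ++ true :: List.replicate j false).idxOf true = i := by
  induction i with
  | zero => simp [List.idxOf_cons_self]
  | succ i ih =>
    rw [List.replicate_succ, List.cons_append, List.idxOf_cons_ne _ (by simp)]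
    simp [ih]

lemma doc_decomp {i j i' j' : ℕ}
    (h : List.replicate i false ++ true :: List.replicate j false =
         List.replicate i' false ++ true :: List.replicate j' false) :
    i = i' ∧ j = j' := by
  have h1 : i = i' := by
    have := congrArg (List.idxOf true) h
    rwa [indexOf_true, indexOf_true] at this
  have h2 : i + 1 + j = i' + 1 + j' := by
    have := congrArg List.length h
    simpa [Nat.add_comm, Nat.add_assoc, Nat.add_left_comm] using this
  exact ⟨h1, by omega⟩

end Aux

/-- The skyline of this regular spanner under the span length
domination relation is not a regular spanner. -/
theorem skyline_spanLen_not_regular :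
    ¬ IsRegular (skyline stmt3Spanner (fun _ => spanLenRel)) := by
  rintro ⟨Q, hQ, A, hseq, hA⟩
  set n := Fintype.card Q with hn
  set d : List Bool := List.replicate n false ++ true :: List.replicate (n + 1) false with hd
  set m0 : Mapping Unit := (fun _ => some (n + 1, n + (n + 1) + 1)) with hm0
  -- m0 is in the skyline on d
  have hm0mem : m0 ∈ skyline stmt3Spanner (fun _ => spanLenRel) d := by
    refine ⟨⟨n, n + 1, hd, Or.inr rfl⟩, ?_⟩
    rintro m' ⟨i', j', hd', hc⟩ hne hrel
    obtain ⟨hi, hj⟩ := doc_decomp (hd.symm.trans hd')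
    subst hi; subst hj
    rcases hc with hc | hc
    · have := hrel.2 () (n + 1, n + (n + 1) + 1) (0, n) rfl hc
      omega
    · apply hne
      funext x; cases x
      rw [hc, hm0]
  -- get an accepting ref-word for m0
  have hm0A : m0 ∈ A.spanner d := by rw [hA]; exact hm0mem
  obtain ⟨w, hacc, hlet, hmap⟩ := hm0A
  have hmo : refMapping w () = some (n + 1, n + (n + 1) + 1) := by rw [hmap]
  -- unfold the mapping equation
  simp only [refMapping] at hmo
  by_cases ho : Label.vopen () ∈ w
  swap
  · rw [if_neg ho] at hmo; exact nomatch hmo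
  rw [if_pos ho, Option.some_inj, Prod.mk.injEq] at hmo
  obtain ⟨hL1, hL2⟩ := hmo
  have hidx : ∀ x : Label Bool Unit,
      (letters (w.take (w.idxOf x))).length ≤ w.idxOf x := fun x =>
    le_trans (letters_length_le _) (List.length_take_le (w.idxOf x) w)
  have hb1 : n + 1 ≤ w.idxOf (Label.vopen ()) := hL1 ▸ hidx _
  have hb2 : n + (n + 1) + 1 ≤ w.idxOf (Label.vclose ()) := hL2 ▸ hidx _
  have hno : Label.vopen () ∉ w.take n := fun hmem => by
    have := indexOf_lt_of_mem_take hmem; omega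
  have hnc : Label.vclose () ∉ w.take n := fun hmem => by
    have := indexOf_lt_of_mem_take hmem; omega
  have hwlen : n < w.length := by
    have := (List.idxOf_lt_length_iff (a := Label.vopen ()) (l := w)).mpr ho
    omega
  have htklen : (w.take n).length = n := by
    rw [List.length_take]; omega
  have hall : ∀ x ∈ w.take n, ∃ a, x = Label.letter a := by
    intro x hx
    cases x with
    | letter a => exact ⟨a, rfl⟩
    | vopen y => cases y; exact absurd hx hno
    | vclose y => cases y; exact absurd hx hnc
  have hmapeq : w.take n = (letters (w.take n)).map Label.letter := all_letters_eq _ hall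
  have hletlen : (letters (w.take n)).length = n := by
    have := congrArg List.length hmapeq
    simp only [List.length_map] at this
    omega
  have hsplit : letters (w.take n) ++ letters (w.drop n) =
      List.replicate n false ++ (true :: List.replicate (n + 1) false) := by
    rw [← letters_append, List.take_append_drop, hlet]
  have hfirst := List.append_inj hsplit (by simp [hletlen])
  have htake : w.take n = List.replicate n (Label.letter false) := by
    rw [hmapeq, hfirst.1, List.map_replicate]
  -- split the accepting path and pump
  obtain ⟨qf, hqf, hpath⟩ := hacc
  have hpath' : A.Path A.init (w.take n ++ w.drop n) qf := by
    rw [List.take_append_drop]; exact hpath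
  obtain ⟨qm, hp1, hp2⟩ := VA.Path.split _ _ hpath'
  rw [htake] at hp1
  obtain ⟨k, hk, hp1'⟩ := pump hp1 (le_of_eq hn)
  set w2 := List.replicate (n + k) (Label.letter false) ++ w.drop n with hw2
  have hacc2 : A.AcceptsRef w2 := ⟨qf, hqf, hp1'.append_path hp2⟩
  have hlet2 : letters w2 =
      List.replicate (n + k) false ++ true :: List.replicate (n + 1) false := by
    rw [hw2, letters_append, letters_replicate, hfirst.2]
  -- index computations in w
  have hod : Label.vopen () ∈ w.drop n := by
    have hw' : Label.vopen () ∈ w.take n ++ w.drop n := by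
      rw [List.take_append_drop]; exact ho
    rcases List.mem_append.mp hw' with h | h
    · exact absurd h hno
    · exact h
  have hio : w.idxOf (Label.vopen ()) = n + (w.drop n).idxOf (Label.vopen ()) := by
    conv_lhs => rw [← List.take_append_drop n w]
    rw [indexOf_append_of_not_mem hno, htklen]
  have hic : w.idxOf (Label.vclose ()) = n + (w.drop n).idxOf (Label.vclose ()) := by
    conv_lhs => rw [← List.take_append_drop n w]
    rw [indexOf_append_of_not_mem hnc, htklen]
  have hslice : ∀ idx : ℕ, w.take (n + idx) = w.take n ++ (w.drop n).take idx := by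
    intro idx
    conv_lhs => rw [← List.take_append_drop n w]
    rw [List.take_append,
      List.take_of_length_le (le_trans (le_of_eq htklen) (Nat.le_add_right n idx)), htklen]
    congr 2
    omega
  have hLo : (letters ((w.drop n).take ((w.drop n).idxOf (Label.vopen ())))).length = 1 := by
    rw [hio, hslice _, letters_append, List.length_append, hletlen] at hL1
    omega
  have hLc : (letters ((w.drop n).take ((w.drop n).idxOf (Label.vclose ())))).length
      = n + 2 := by
    rw [hic, hslice _, letters_append, List.length_append, hletlen] at hL2
    omega
  -- the mapping of the pumped ref-word
  set m1 : Mapping Unit := (fun _ => some ((n + k) + 1, (n + k) + (n + 1) + 1)) with hm1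
  have hrepo : Label.vopen () ∉ List.replicate (n + k) (Label.letter false : Label Bool Unit) := by
    simp [List.mem_replicate]
  have hrepc : Label.vclose () ∉ List.replicate (n + k) (Label.letter false : Label Bool Unit) := by
    simp [List.mem_replicate]
  have ho2 : Label.vopen () ∈ w2 := by
    rw [hw2]; exact List.mem_append.mpr (Or.inr hod)
  have hio2 : w2.idxOf (Label.vopen ()) = (n + k) + (w.drop n).idxOf (Label.vopen ()) := by
    rw [hw2, indexOf_append_of_not_mem hrepo, List.length_replicate]
  have hic2 : w2.idxOf (Label.vclose ()) = (n + k) + (w.drop n).idxOf (Label.vclose ()) := by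
    rw [hw2, indexOf_append_of_not_mem hrepc, List.length_replicate]
  have hslice2 : ∀ idx : ℕ, w2.take ((n + k) + idx) =
      List.replicate (n + k) (Label.letter false) ++ (w.drop n).take idx := by
    intro idx
    rw [hw2, List.take_append,
      List.take_of_length_le (by simp), List.length_replicate]
    congr 2
    omega
  have hmap2 : refMapping w2 = m1 := by
    funext x
    cases x
    simp only [refMapping]
    rw [if_pos ho2, hio2, hic2, hslice2 _, hslice2 _, letters_append, letters_append,
      letters_replicate, Option.some_inj, Prod.mk.injEq]
    constructor
    · rw [List.length_append, List.length_replicate, hLo]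
    · rw [List.length_append, List.length_replicate, hLc]
      omega
  -- contradiction with the skyline on the pumped document
  have hm1A : m1 ∈ A.spanner (List.replicate (n + k) false ++
      true :: List.replicate (n + 1) false) := ⟨w2, hacc2, hlet2, hmap2⟩
  rw [hA] at hm1A
  obtain ⟨-, hmax⟩ := hm1A
  refine hmax (fun _ => some (0, n + k)) ⟨n + k, n + 1, rfl, Or.inl rfl⟩ ?_ ?_
  · intro hEq
    have := congrFun hEq ()
    rw [hm1, Option.some_inj, Prod.mk.injEq] at this
    omega
  · refine ⟨fun x => by cases x; simp [hm1], ?_⟩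
    intro x s1 s2 h1 h2
    cases x
    rw [hm1] at h1
    rw [Option.some_inj] at h1 h2
    rw [← h1, ← h2]
    simp only
    omega

end DocSpanners
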